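/- The reduction relation of SK-combinatory logic is confluent (Church–Rosser): if t ⟶* u and t ⟶* v then there exists w with u ⟶* w and v ⟶* w. -/

import Mathlib

inductive Term : Type
  | S : Term
  | K : Term
  | app : Term → Term → Term
deriving DecidableEq

inductive Step : Term → Term → Prop
  | Srule (a b c : Term) :
      Step (.app (.app (.app .S a) b) c) (.app (.app a c) (.app b c))
  | Krule (a b : Term) : Step (.app (.app .K a) b) a
  | appL {a a' : Term} (b : Term) : Step a a' → Step (.app a b) (.app a' b)
  | appR (a : Term) {b b' : Term} : Step b b' → Step (.app a b) (.app a b')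

def Reds : Term → Term → Prop := Relation.ReflTransGen Step

inductive Par : Term → Term → Prop
  | S : Par .S .S
  | K : Par .K .K
  | app {a a' b b' : Term} : Par a a' → Par b b' → Par (.app a b) (.app a' b')
  | Srule {a a' b b' c c' : Term} : Par a a' → Par b b' → Par c c' →
      Par (.app (.app (.app .S a) b) c) (.app (.app a' c') (.app b' c'))
  | Krule {a a' : Term} (b : Term) : Par a a' → Par (.app (.app .K a) b) a'

theorem Par.refl : ∀ t : Term, Par t t
  | .S => .S
  | .K => .K
  | .app a b => .app (Par.refl a) (Par.refl b)

def cd : Term → Term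
  | .app (.app (.app .S a) b) c => .app (.app (cd a) (cd c)) (.app (cd b) (cd c))
  | .app (.app .K a) _ => cd a
  | .app a b => .app (cd a) (cd b)
  | .S => .S
  | .K => .K

theorem triangle : ∀ {t u : Term}, Par t u → Par u (cd t) := by
  intro t u h
  induction h with
  | S => exact .S
  | K => exact .K
  | Srule _ _ _ iha ihb ihc => exact .app (.app iha ihc) (.app ihb ihc)
  | Krule _ _ iha => exact iha
  | @app a a' b b' ha hb iha ihb =>
    match a, ha, iha with
    | .app (.app .S x) y, ha, iha =>
      cases ha with
      | app h1 hy =>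
        cases h1 with
        | app hS hx =>
          cases hS
          cases iha with
          | app i1 iy =>
            cases i1 with
            | app _ ix => exact .Srule ix iy ihb
    | .app .K x, ha, iha =>
      cases ha with
      | app hK hx =>
        cases hK
        cases iha with
        | app _ ix => exact .Krule _ ix
    | .S, ha, iha => exact .app iha ihb
    | .K, ha, iha => exact .app iha ihb
    | .app .S y, ha, iha => exact .app iha ihb
    | .app (.app (.app p q) r) y, ha, iha => exact .app iha ihb
    | .app (.app .K q) r, ha, iha => exact .app iha ihb

theorem par_diamond {t u v : Term} (hu : Par t u) (hv : Par t v) :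
    ∃ w, Par u w ∧ Par v w :=
  ⟨cd t, triangle hu, triangle hv⟩

theorem Reds.app {a a' b b' : Term} (ha : Reds a a') (hb : Reds b b') :
    Reds (.app a b) (.app a' b') := by
  have h1 : Reds (.app a b) (.app a' b) :=
    Relation.ReflTransGen.lift (fun x => Term.app x b) (fun _ _ h => Step.appL b h) _ _ ha
  have h2 : Reds (.app a' b) (.app a' b') :=
    Relation.ReflTransGen.lift (fun x => Term.app a' x) (fun _ _ h => Step.appR a' h) _ _ hb
  exact h1.trans h2

theorem par_reds {t u : Term} (h : Par t u) : Reds t u := by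
  induction h with
  | S => exact Relation.ReflTransGen.refl
  | K => exact Relation.ReflTransGen.refl
  | app _ _ iha ihb => exact Reds.app iha ihb
  | Srule _ _ _ iha ihb ihc =>
    exact (Reds.app (Reds.app (Reds.app Relation.ReflTransGen.refl iha) ihb) ihc).trans
      (Relation.ReflTransGen.single (Step.Srule _ _ _))
  | Krule b _ iha =>
    exact (Relation.ReflTransGen.single (Step.Krule _ _)).trans iha

theorem step_par {t u : Term} (h : Step t u) : Par t u := by
  induction h with
  | Srule a b c => exact .Srule (Par.refl a) (Par.refl b) (Par.refl c)
  | Krule a b => exact .Krule b (Par.refl a)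
  | appL b _ ih => exact .app ih (Par.refl b)
  | appR a _ ih => exact .app (Par.refl a) ih

theorem reds_iff_parStar {t u : Term} :
    Reds t u ↔ Relation.ReflTransGen Par t u := by
  constructor
  · exact fun h => Relation.ReflTransGen.mono (fun _ _ => step_par) _ _ h
  · intro h
    induction h with
    | refl => exact Relation.ReflTransGen.refl
    | tail _ h ih => exact ih.trans (par_reds h)

theorem church_rosser {t u v : Term} (hu : Reds t u) (hv : Reds t v) :
    ∃ w : Term, Reds u w ∧ Reds v w := by
  have hd := Relation.church_rosser (r := Par)
    (fun a b c hab hac =>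
      let ⟨d, h1, h2⟩ := par_diamond hab hac
      ⟨d, Relation.ReflGen.single h1, Relation.ReflTransGen.single h2⟩)
    (reds_iff_parStar.mp hu) (reds_iff_parStar.mp hv)
  obtain ⟨w, h1, h2⟩ := hd
  exact ⟨w, reds_iff_parStar.mpr h1, reds_iff_parStar.mpr h2⟩
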